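/- Let H be a group with finite symmetric generating set S whose word metric is δ-hyperbolic. For any κ ≥ 0 there exists a constant M > 0, depending only on κ, H, S and δ, such that if h ∈ H is κ-almost conjugacy minimal, then there exist an element c ∈ H with |c| ≤ M and a conjugacy minimal element u in the conjugacy class of h such that h = c⁻¹uc. -/

import Mathlib

open Set

/-- The word length of `h` with respect to the generating set `S`: the least `n` such
that `h` is a product of `n` elements of `S`. -/
noncomputable def wordLength {H : Type*} [Group H] (S : Set H) (h : H) : ℕ :=
  sInf {n | ∃ l : List H, l.length = n ∧ (∀ x ∈ l, x ∈ S) ∧ l.prod = h}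

/-- The word metric: `d(a,b) = |a⁻¹ b|`. -/
noncomputable def wordDist {H : Type*} [Group H] (S : Set H) (a b : H) : ℕ :=
  wordLength S (a⁻¹ * b)

/-- `g : {0,…,n} → H` is a discrete geodesic (of length `n`) in the word metric:
`d(g i, g j) = |i − j|` for all `i, j ≤ n`. -/
def IsDiscreteGeodesic {H : Type*} [Group H] (S : Set H) (g : ℕ → H) (n : ℕ) : Prop :=
  ∀ i j : ℕ, i ≤ j → j ≤ n → wordDist S (g i) (g j) = j - i

/-- The Gromov product `(x,y)_z = ½(d(x,z) + d(y,z) − d(x,y))` in the word metric. -/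
noncomputable def gromovProd {H : Type*} [Group H] (S : Set H) (x y z : H) : ℝ :=
  ((wordDist S x z : ℝ) + (wordDist S y z : ℝ) - (wordDist S x y : ℝ)) / 2

/-- The word metric of `(H,S)` is `δ`-hyperbolic: geodesic triangles in the Cayley graph
are `δ`-thin, i.e. for any `x, y, z`, any discrete geodesics `f` from `z` to `x` and `g`
from `z` to `y`, and any `i` with `i ≤ (x,y)_z`, one has `d(f i, g i) ≤ δ`. -/
def WordHyperbolic {H : Type*} [Group H] (S : Set H) (δ : ℝ) : Prop :=
  ∀ (x y z : H) (f g : ℕ → H),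
    f 0 = z → f (wordDist S z x) = x → IsDiscreteGeodesic S f (wordDist S z x) →
    g 0 = z → g (wordDist S z y) = y → IsDiscreteGeodesic S g (wordDist S z y) →
    ∀ i : ℕ, i ≤ wordDist S z x → i ≤ wordDist S z y →
      (i : ℝ) ≤ gromovProd S x y z →
      (wordDist S (f i) (g i) : ℝ) ≤ δ

/-- `h` is `κ`-almost conjugacy minimal: `|h| ≤ |h'| + κ` for every conjugate `h'` of
`h` in `H`. -/
def AlmostConjMin {H : Type*} [Group H] (S : Set H) (κ : ℝ) (h : H) : Prop :=
  ∀ g : H, (wordLength S h : ℝ) ≤ (wordLength S (g⁻¹ * h * g) : ℝ) + κ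

/-- `h` is conjugacy minimal: `|h| ≤ |h'|` for every conjugate `h'` of `h` in `H`. -/
def ConjMin {H : Type*} [Group H] (S : Set H) (h : H) : Prop :=
  ∀ g : H, wordLength S h ≤ wordLength S (g⁻¹ * h * g)

section Basics

variable {H : Type*} [Group H] {S : Set H}

lemma exists_word (hSsym : ∀ s ∈ S, s⁻¹ ∈ S) (hSgen : Subgroup.closure S = ⊤) (h : H) :
    ∃ l : List H, (∀ x ∈ l, x ∈ S) ∧ l.prod = h := by
  have hmem : h ∈ Subgroup.closure S := by rw [hSgen]; trivial
  induction hmem using Subgroup.closure_induction with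
  | mem x hx => exact ⟨[x], by simp [hx]⟩
  | one => exact ⟨[], by simp⟩
  | mul x y _ _ hx hy =>
      obtain ⟨l1, h1, p1⟩ := hx; obtain ⟨l2, h2, p2⟩ := hy
      refine ⟨l1 ++ l2, ?_, by simp [p1, p2]⟩
      intro a ha; rcases List.mem_append.1 ha with h | h
      · exact h1 a h
      · exact h2 a h
  | inv x _ hx =>
      obtain ⟨l, hl, pl⟩ := hx
      refine ⟨(l.map fun y => y⁻¹).reverse, ?_, ?_⟩
      · intro a ha
        simp only [List.mem_reverse, List.mem_map] at ha
        obtain ⟨b, hb, rfl⟩ := ha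
        exact hSsym b (hl b hb)
      · rw [← List.prod_inv_reverse, pl]

lemma wordLength_le (h : H) {l : List H} (hl : ∀ x ∈ l, x ∈ S) (hp : l.prod = h) :
    wordLength S h ≤ l.length :=
  Nat.sInf_le ⟨l, rfl, hl, hp⟩

lemma exists_min_word (hSsym : ∀ s ∈ S, s⁻¹ ∈ S) (hSgen : Subgroup.closure S = ⊤) (h : H) :
    ∃ l : List H, l.length = wordLength S h ∧ (∀ x ∈ l, x ∈ S) ∧ l.prod = h := by
  have hne : {n | ∃ l : List H, l.length = n ∧ (∀ x ∈ l, x ∈ S) ∧ l.prod = h}.Nonempty := by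
    obtain ⟨l, hl, hp⟩ := exists_word hSsym hSgen h
    exact ⟨l.length, l, rfl, hl, hp⟩
  exact Nat.sInf_mem hne

lemma wordLength_one : wordLength S (1 : H) = 0 :=
  Nat.le_zero.1 (by simpa using wordLength_le (S := S) (1 : H) (l := []) (by simp) (by simp))

lemma wordLength_mul_le (hSsym : ∀ s ∈ S, s⁻¹ ∈ S) (hSgen : Subgroup.closure S = ⊤)
    (a b : H) : wordLength S (a * b) ≤ wordLength S a + wordLength S b := by
  obtain ⟨la, hla, ha, pa⟩ := exists_min_word hSsym hSgen a
  obtain ⟨lb, hlb, hb, pb⟩ := exists_min_word hSsym hSgen b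
  have := wordLength_le (S := S) (a * b) (l := la ++ lb)
    (by intro x hx; rcases List.mem_append.1 hx with h | h; exacts [ha x h, hb x h])
    (by simp [pa, pb])
  simpa [hla, hlb] using this

lemma wordLength_inv (hSsym : ∀ s ∈ S, s⁻¹ ∈ S) (hSgen : Subgroup.closure S = ⊤) (a : H) :
    wordLength S a⁻¹ = wordLength S a := by
  have key : ∀ x : H, wordLength S x⁻¹ ≤ wordLength S x := by
    intro x
    obtain ⟨l, hl, hx, px⟩ := exists_min_word hSsym hSgen x
    have := wordLength_le (S := S) x⁻¹ (l := (l.map fun y => y⁻¹).reverse)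
      (by intro a ha
          simp only [List.mem_reverse, List.mem_map] at ha
          obtain ⟨b, hb, rfl⟩ := ha
          exact hSsym b (hx b hb))
      (by rw [← List.prod_inv_reverse, px])
    simpa [hl] using this
  exact le_antisymm (key a) (by simpa using key a⁻¹)

lemma wordDist_symm (hSsym : ∀ s ∈ S, s⁻¹ ∈ S) (hSgen : Subgroup.closure S = ⊤) (a b : H) :
    wordDist S a b = wordDist S b a := by
  unfold wordDist
  rw [← wordLength_inv hSsym hSgen]
  simp [mul_inv_rev]

lemma wordDist_triangle (hSsym : ∀ s ∈ S, s⁻¹ ∈ S) (hSgen : Subgroup.closure S = ⊤)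
    (a b c : H) : wordDist S a c ≤ wordDist S a b + wordDist S b c := by
  have := wordLength_mul_le hSsym hSgen (a⁻¹ * b) (b⁻¹ * c)
  simpa [wordDist, mul_assoc] using this

lemma wordDist_left (g a b : H) : wordDist S (g * a) (g * b) = wordDist S a b := by
  simp [wordDist, mul_inv_rev, mul_assoc]

end Basics


section Geod

variable {H : Type*} [Group H] {S : Set H}

open Classical in
/-- A fixed minimal-length word representing `h`. -/
noncomputable def minWord (S : Set H) (h : H) : List H :=
  if ex : ∃ l : List H, l.length = wordLength S h ∧ (∀ x ∈ l, x ∈ S) ∧ l.prod = h then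
    ex.choose else []

lemma minWord_spec (hSsym : ∀ s ∈ S, s⁻¹ ∈ S) (hSgen : Subgroup.closure S = ⊤) (h : H) :
    (minWord S h).length = wordLength S h ∧ (∀ x ∈ minWord S h, x ∈ S) ∧
      (minWord S h).prod = h := by
  have ex := exists_min_word hSsym hSgen h
  rw [minWord]
  rw [dif_pos ex]
  exact ex.choose_spec

/-- The discrete geodesic from `1` to `h` given by prefixes of a minimal word. -/
noncomputable def geodTo (S : Set H) (h : H) (i : ℕ) : H := ((minWord S h).take i).prod

lemma geodTo_zero (h : H) : geodTo S h 0 = 1 := by simp [geodTo]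

variable (hSsym : ∀ s ∈ S, s⁻¹ ∈ S) (hSgen : Subgroup.closure S = ⊤)
include hSsym hSgen

lemma geodTo_last (h : H) : geodTo S h (wordLength S h) = h := by
  obtain ⟨hlen, _, hprod⟩ := minWord_spec hSsym hSgen h
  rw [geodTo, ← hlen, List.take_length, hprod]

lemma wordLength_geodTo_le (h : H) (i : ℕ) : wordLength S (geodTo S h i) ≤ i := by
  obtain ⟨hlen, hmem, hprod⟩ := minWord_spec hSsym hSgen h
  have := wordLength_le (S := S) (geodTo S h i)
    (l := (minWord S h).take i) (fun x hx => hmem x (List.mem_of_mem_take hx)) rfl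
  exact this.trans (by simpa using List.length_take_le i _)

lemma geodTo_isGeodesic (h : H) : IsDiscreteGeodesic S (geodTo S h) (wordLength S h) := by
  obtain ⟨hlen, hmem, hprod⟩ := minWord_spec hSsym hSgen h
  intro i j hij hj
  set l := minWord S h with hl
  have hsplit : l.take j = l.take i ++ (l.take j).drop i := by
    conv_lhs => rw [← List.take_append_drop i (l.take j)]
    rw [List.take_take, min_eq_left hij]
  have hmul : geodTo S h j = geodTo S h i * ((l.take j).drop i).prod := by
    show (l.take j).prod = (l.take i).prod * ((l.take j).drop i).prod
    conv_lhs => rw [hsplit]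
    rw [List.prod_append]
  have heq1 : (geodTo S h i)⁻¹ * geodTo S h j = ((l.take j).drop i).prod := by
    rw [hmul]; group
  have hlen2 : ((l.take j).drop i).length = j - i := by
    simp only [List.length_drop, List.length_take]
    omega
  have hle : wordDist S (geodTo S h i) (geodTo S h j) ≤ j - i := by
    have := wordLength_le (S := S) ((geodTo S h i)⁻¹ * geodTo S h j)
      (l := (l.take j).drop i)
      (fun x hx => hmem x (List.mem_of_mem_take (List.mem_of_mem_drop hx))) heq1.symm
    rw [wordDist]
    omega
  have h1 : wordLength S (geodTo S h i) ≤ i := wordLength_geodTo_le hSsym hSgen h i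
  have h2 : wordLength S ((geodTo S h j)⁻¹ * h) ≤ wordLength S h - j := by
    have hrest : geodTo S h j * (l.drop j).prod = h := by
      rw [geodTo, ← hl, ← List.prod_append, List.take_append_drop, hprod]
    have heq : (geodTo S h j)⁻¹ * h = (l.drop j).prod :=
      (eq_inv_mul_iff_mul_eq.2 hrest).symm
    have := wordLength_le (S := S) ((geodTo S h j)⁻¹ * h)
      (l := l.drop j) (fun x hx => hmem x (List.mem_of_mem_drop hx)) heq.symm
    simp only [List.length_drop, hlen] at this
    exact this
  have htri : wordLength S h ≤ wordLength S (geodTo S h i) +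
      (wordDist S (geodTo S h i) (geodTo S h j) + wordLength S ((geodTo S h j)⁻¹ * h)) := by
    have e1 : h = geodTo S h i * (((geodTo S h i)⁻¹ * geodTo S h j) *
        ((geodTo S h j)⁻¹ * h)) := by group
    calc wordLength S h = wordLength S (geodTo S h i * (((geodTo S h i)⁻¹ * geodTo S h j) *
        ((geodTo S h j)⁻¹ * h))) := by rw [← e1]
      _ ≤ wordLength S (geodTo S h i) + wordLength S (((geodTo S h i)⁻¹ * geodTo S h j) *
          ((geodTo S h j)⁻¹ * h)) := wordLength_mul_le hSsym hSgen _ _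
      _ ≤ _ := by
          have := wordLength_mul_le hSsym hSgen ((geodTo S h i)⁻¹ * geodTo S h j)
            ((geodTo S h j)⁻¹ * h)
          rw [wordDist]
          omega
  rw [wordDist] at *
  omega

/-- Discrete geodesic from `z` to `x`. -/
noncomputable def geodFrom (S : Set H) (z x : H) (i : ℕ) : H := z * geodTo S (z⁻¹ * x) i

omit hSsym hSgen in
lemma geodFrom_zero (z x : H) : geodFrom S z x 0 = z := by simp [geodFrom, geodTo_zero]

lemma geodFrom_last (z x : H) : geodFrom S z x (wordDist S z x) = x := by
  rw [geodFrom, wordDist, geodTo_last hSsym hSgen]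
  group

lemma geodFrom_isGeodesic (z x : H) :
    IsDiscreteGeodesic S (geodFrom S z x) (wordDist S z x) := by
  intro i j hij hj
  rw [geodFrom, geodFrom, wordDist_left]
  exact geodTo_isGeodesic hSsym hSgen (z⁻¹ * x) i j hij hj

lemma wordDist_geodFrom_self (z x : H) {i : ℕ} (hi : i ≤ wordDist S z x) :
    wordDist S z (geodFrom S z x i) = i := by
  have := geodFrom_isGeodesic hSsym hSgen z x 0 i (Nat.zero_le _) hi
  rw [geodFrom_zero] at this
  simpa using this

lemma wordDist_geodFrom_end (z x : H) {i : ℕ} (hi : i ≤ wordDist S z x) :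
    wordDist S (geodFrom S z x i) x = wordDist S z x - i := by
  have := geodFrom_isGeodesic hSsym hSgen z x i (wordDist S z x) hi le_rfl
  rwa [geodFrom_last hSsym hSgen] at this

lemma wordLength_geodFrom_one (x : H) {i : ℕ} (hi : i ≤ wordDist S (1 : H) x) :
    wordLength S (geodFrom S 1 x i) ≤ i := by
  have := wordDist_geodFrom_self hSsym hSgen (1 : H) x hi
  rw [wordDist] at this
  simp only [inv_one, one_mul] at this
  omega

end Geod


section Prod

variable {H : Type*} [Group H] {S : Set H} {δ : ℝ}
variable (hSsym : ∀ s ∈ S, s⁻¹ ∈ S) (hSgen : Subgroup.closure S = ⊤)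
include hSsym hSgen

lemma gromovProd_nonneg (x y z : H) : 0 ≤ gromovProd S x y z := by
  have h1 := wordDist_triangle hSsym hSgen x z y
  have h2 := wordDist_symm hSsym hSgen z y
  rw [gromovProd]
  have : (wordDist S x y : ℝ) ≤ (wordDist S x z : ℝ) + (wordDist S y z : ℝ) := by
    rw [wordDist_symm hSsym hSgen y z]
    exact_mod_cast h1.trans_eq (by rw [h2])
  linarith

lemma gromovProd_le_left (x y z : H) : gromovProd S x y z ≤ (wordDist S z x : ℝ) := by
  have h1 : wordDist S y z ≤ wordDist S y x + wordDist S x z :=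
    wordDist_triangle hSsym hSgen y x z
  rw [gromovProd, wordDist_symm hSsym hSgen z x]
  have e1 : wordDist S y x = wordDist S x y := wordDist_symm hSsym hSgen y x
  rw [e1] at h1
  have : (wordDist S y z : ℝ) ≤ (wordDist S x y : ℝ) + (wordDist S x z : ℝ) := by
    exact_mod_cast h1
  linarith

lemma gromovProd_le_right (x y z : H) : gromovProd S x y z ≤ (wordDist S z y : ℝ) := by
  have h1 : wordDist S x z ≤ wordDist S x y + wordDist S y z :=
    wordDist_triangle hSsym hSgen x y z
  rw [gromovProd, wordDist_symm hSsym hSgen z y]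
  have : (wordDist S x z : ℝ) ≤ (wordDist S x y : ℝ) + (wordDist S y z : ℝ) := by
    exact_mod_cast h1
  linarith

variable (hhyp : WordHyperbolic S δ)
include hhyp

lemma thin (z x y : H) (i : ℕ) (hix : i ≤ wordDist S z x) (hiy : i ≤ wordDist S z y)
    (hprod : (i : ℝ) ≤ gromovProd S x y z) :
    (wordDist S (geodFrom S z x i) (geodFrom S z y i) : ℝ) ≤ δ :=
  hhyp x y z (geodFrom S z x) (geodFrom S z y)
    (geodFrom_zero z x) (geodFrom_last hSsym hSgen z x) (geodFrom_isGeodesic hSsym hSgen z x)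
    (geodFrom_zero z y) (geodFrom_last hSsym hSgen z y) (geodFrom_isGeodesic hSsym hSgen z y)
    i hix hiy hprod

/-- The four-point (hyperbolic inequality for Gromov products) consequence. -/
lemma fourPoint (w x y z : H) :
    min (gromovProd S x z w) (gromovProd S z y w) - (δ + 1) ≤ gromovProd S x y w := by
  set P : ℝ := min (gromovProd S x z w) (gromovProd S z y w) with hP
  have hP0 : 0 ≤ P := le_min (gromovProd_nonneg hSsym hSgen x z w)
    (gromovProd_nonneg hSsym hSgen z y w)
  set i : ℕ := ⌊P⌋₊ with hi
  have hiP : (i : ℝ) ≤ P := Nat.floor_le hP0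
  have hPi : P - 1 ≤ (i : ℝ) := by
    have := Nat.lt_floor_add_one P
    linarith
  have hixz : (i : ℝ) ≤ gromovProd S x z w := hiP.trans (min_le_left _ _)
  have hizy : (i : ℝ) ≤ gromovProd S z y w := hiP.trans (min_le_right _ _)
  have hix : i ≤ wordDist S w x := by
    have := hixz.trans (gromovProd_le_left hSsym hSgen x z w)
    exact_mod_cast this
  have hiz : i ≤ wordDist S w z := by
    have := hixz.trans (gromovProd_le_right hSsym hSgen x z w)
    exact_mod_cast this
  have hiy : i ≤ wordDist S w y := by
    have := hizy.trans (gromovProd_le_right hSsym hSgen z y w)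
    exact_mod_cast this
  have t1 : (wordDist S (geodFrom S w x i) (geodFrom S w z i) : ℝ) ≤ δ :=
    thin hSsym hSgen hhyp w x z i hix hiz hixz
  have t2 : (wordDist S (geodFrom S w z i) (geodFrom S w y i) : ℝ) ≤ δ :=
    thin hSsym hSgen hhyp w z y i hiz hiy hizy
  -- distance from x to the geodesic points
  have dx : wordDist S x (geodFrom S w x i) = wordDist S w x - i := by
    rw [wordDist_symm hSsym hSgen]
    exact wordDist_geodFrom_end hSsym hSgen w x hix
  have dy : wordDist S (geodFrom S w y i) y = wordDist S w y - i :=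
    wordDist_geodFrom_end hSsym hSgen w y hiy
  have tri : (wordDist S x y : ℝ) ≤ (wordDist S x (geodFrom S w x i) : ℝ) +
      (wordDist S (geodFrom S w x i) (geodFrom S w z i) : ℝ) +
      (wordDist S (geodFrom S w z i) (geodFrom S w y i) : ℝ) +
      (wordDist S (geodFrom S w y i) y : ℝ) := by
    have a1 := wordDist_triangle hSsym hSgen x (geodFrom S w x i) (geodFrom S w z i)
    have a2 := wordDist_triangle hSsym hSgen x (geodFrom S w z i) (geodFrom S w y i)
    have a3 := wordDist_triangle hSsym hSgen x (geodFrom S w y i) y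
    have key : wordDist S x y ≤ wordDist S x (geodFrom S w x i) +
        wordDist S (geodFrom S w x i) (geodFrom S w z i) +
        wordDist S (geodFrom S w z i) (geodFrom S w y i) +
        wordDist S (geodFrom S w y i) y := by omega
    exact_mod_cast key
  have dxr : (wordDist S x (geodFrom S w x i) : ℝ) = (wordDist S w x : ℝ) - i := by
    rw [dx]; exact Nat.cast_sub hix
  have dyr : (wordDist S (geodFrom S w y i) y : ℝ) = (wordDist S w y : ℝ) - i := by
    rw [dy]; exact Nat.cast_sub hiy
  have hxy : (wordDist S x y : ℝ) ≤ (wordDist S w x : ℝ) - i + δ + δ +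
      ((wordDist S w y : ℝ) - i) := by
    rw [dxr, dyr] at tri
    linarith
  rw [gromovProd]
  rw [wordDist_symm hSsym hSgen x w, wordDist_symm hSsym hSgen y w]
  linarith

end Prod


section Corner

variable {H : Type*} [Group H] {S : Set H} {δ : ℝ}
variable (hSsym : ∀ s ∈ S, s⁻¹ ∈ S) (hSgen : Subgroup.closure S = ⊤)
variable (hδ : 0 ≤ δ) (hhyp : WordHyperbolic S δ)
include hSsym hSgen hδ hhyp

/-- Corner lemma: if `c` is a shortest conjugator taking `h` to a minimal element `u`,
then the concatenation `c⁻¹ · u` is almost geodesic. -/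
lemma corner {h u c : H} {m t : ℕ}
    (hconjlb : ∀ g : H, m ≤ wordLength S (g⁻¹ * h * g))
    (hu : u = c * h * c⁻¹) (hum : wordLength S u = m) (hct : wordLength S c = t)
    (hmin : ∀ c' : H, wordLength S (c' * h * c'⁻¹) = m → t ≤ wordLength S c') :
    (t : ℝ) + (m : ℝ) - (2 * δ + 2) < (wordLength S (c⁻¹ * u) : ℝ) := by
  by_contra hD
  push_neg at hD
  set D : ℕ := wordLength S (c⁻¹ * u) with hDdef
  set i : ℕ := ⌊δ⌋₊ + 1 with hidef
  have hiδ : (i : ℝ) ≤ δ + 1 := by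
    have := Nat.floor_le hδ
    rw [hidef]
    push_cast
    linarith
  have hδi : δ < (i : ℝ) := by
    have := Nat.lt_floor_add_one δ
    rw [hidef]
    push_cast
    linarith
  -- distances at the corner c⁻¹
  have d1 : wordDist S c⁻¹ 1 = t := by
    simp only [wordDist, inv_inv, mul_one, hct]
  have d1' : wordDist S 1 c⁻¹ = t := by
    rw [wordDist_symm hSsym hSgen, d1]
  have d2 : wordDist S c⁻¹ (c⁻¹ * u) = m := by
    simp only [wordDist, inv_mul_cancel_left, hum]
  have d2' : wordDist S (c⁻¹ * u) c⁻¹ = m := by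
    rw [wordDist_symm hSsym hSgen, d2]
  have d3 : wordDist S 1 (c⁻¹ * u) = D := by
    simp only [wordDist, inv_one, one_mul, hDdef]
  -- the Gromov product at the corner is large
  have hProd : (i : ℝ) ≤ gromovProd S 1 (c⁻¹ * u) c⁻¹ := by
    rw [gromovProd, d1', d2', d3]
    linarith
  have hix : i ≤ wordDist S c⁻¹ 1 := by
    have := hProd.trans (gromovProd_le_left hSsym hSgen 1 (c⁻¹ * u) c⁻¹)
    exact_mod_cast this
  have hiy : i ≤ wordDist S c⁻¹ (c⁻¹ * u) := by
    have := hProd.trans (gromovProd_le_right hSsym hSgen 1 (c⁻¹ * u) c⁻¹)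
    exact_mod_cast this
  have hit : i ≤ t := by rwa [d1] at hix
  have him : i ≤ m := by rwa [d2] at hiy
  have hthin := thin hSsym hSgen hhyp c⁻¹ 1 (c⁻¹ * u) i hix hiy hProd
  set F : H := geodFrom S c⁻¹ 1 i with hF
  set G : H := geodFrom S c⁻¹ (c⁻¹ * u) i with hG
  -- G = c⁻¹ * (prefix of u of length i)
  set μ : ℕ → H := geodTo S u with hμ
  have hGform : G = c⁻¹ * μ i := by
    rw [hG, geodFrom]
    have : (c⁻¹)⁻¹ * (c⁻¹ * u) = u := by group
    rw [this]
  -- length of F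
  have hLF : wordLength S F = t - i := by
    have := wordDist_geodFrom_end hSsym hSgen c⁻¹ 1 hix
    rw [d1] at this
    rw [← wordLength_inv hSsym hSgen]
    simpa [wordDist] using this
  -- length of G is < t
  have hLG : (wordLength S G : ℝ) < t := by
    have h1 : wordLength S G ≤ wordLength S F + wordDist S F G := by
      have : G = F * (F⁻¹ * G) := by group
      calc wordLength S G = wordLength S (F * (F⁻¹ * G)) := by rw [← this]
        _ ≤ wordLength S F + wordLength S (F⁻¹ * G) := wordLength_mul_le hSsym hSgen _ _
        _ = _ := rfl
    have h2 : (wordLength S G : ℝ) ≤ (wordLength S F : ℝ) + (wordDist S F G : ℝ) := by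
      exact_mod_cast h1
    have h3 : (wordLength S F : ℝ) = (t : ℝ) - i := by
      rw [hLF]; exact Nat.cast_sub hit
    linarith
  -- the shifted element is a minimal conjugate
  have hdμ : wordDist S (μ i) u = m - i := by
    have := geodTo_isGeodesic hSsym hSgen u i (wordLength S u) (by omega) le_rfl
    rw [geodTo_last hSsym hSgen, hum] at this
    exact this
  have hLμ : wordLength S (μ i) ≤ i := wordLength_geodTo_le hSsym hSgen u i
  have hshift_le : wordLength S ((μ i)⁻¹ * u * μ i) ≤ m := by
    have e : (μ i)⁻¹ * u * μ i = ((μ i)⁻¹ * u) * μ i := by group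
    have h1 : wordLength S ((μ i)⁻¹ * u * μ i) ≤
        wordLength S ((μ i)⁻¹ * u) + wordLength S (μ i) := by
      rw [e]; exact wordLength_mul_le hSsym hSgen _ _
    have h2 : wordLength S ((μ i)⁻¹ * u) = m - i := hdμ
    omega
  have hshift_ge : m ≤ wordLength S ((μ i)⁻¹ * u * μ i) := by
    have e : (μ i)⁻¹ * u * μ i = (c⁻¹ * μ i)⁻¹ * h * (c⁻¹ * μ i) := by
      rw [hu]; group
    rw [e]
    exact hconjlb (c⁻¹ * μ i)
  have hshift : wordLength S ((μ i)⁻¹ * u * μ i) = m := le_antisymm hshift_le hshift_ge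
  -- so G⁻¹ is a conjugator to a minimal element, hence has length ≥ t
  have hconj' : wordLength S (G⁻¹ * h * (G⁻¹)⁻¹) = m := by
    have e : G⁻¹ * h * (G⁻¹)⁻¹ = (μ i)⁻¹ * u * μ i := by
      rw [hGform, hu]; group
    rw [e, hshift]
  have hge := hmin G⁻¹ hconj'
  rw [wordLength_inv hSsym hSgen] at hge
  have : (t : ℝ) ≤ (wordLength S G : ℝ) := by exact_mod_cast hge
  linarith

end Corner


section Ball

variable {H : Type*} [Group H] {S : Set H}
variable (hSfin : S.Finite) (hSsym : ∀ s ∈ S, s⁻¹ ∈ S) (hSgen : Subgroup.closure S = ⊤)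
include hSfin hSsym hSgen

lemma ball_finite : ∀ k : ℕ, {x : H | wordLength S x ≤ k}.Finite := by
  intro k
  induction k with
  | zero =>
      apply Set.Finite.subset (Set.finite_singleton (1 : H))
      intro x hx
      simp only [Set.mem_setOf_eq, Nat.le_zero] at hx
      obtain ⟨l, hlen, _, hp⟩ := exists_min_word hSsym hSgen x
      rw [hx] at hlen
      rw [List.length_eq_zero_iff] at hlen
      subst hlen
      simp only [List.prod_nil] at hp
      simp [← hp]
  | succ k ih =>
      apply Set.Finite.subset (Set.Finite.union ih
        (Set.Finite.biUnion hSfin (fun s _ => ih.image (fun y => s * y))))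
      intro x hx
      simp only [Set.mem_setOf_eq] at hx
      obtain ⟨l, hlen, hmem, hp⟩ := exists_min_word hSsym hSgen x
      match l, hlen, hmem, hp with
      | [], hlen, hmem, hp =>
          left
          simp only [List.prod_nil] at hp
          simp only [List.length_nil] at hlen
          have : wordLength S x = 0 := by omega
          simp only [Set.mem_setOf_eq]
          omega
      | s :: l', hlen, hmem, hp =>
          right
          simp only [Set.mem_iUnion]
          refine ⟨s, hmem s (by simp), l'.prod, ?_, ?_⟩
          · simp only [Set.mem_setOf_eq]
            have h1 := wordLength_le (S := S) l'.prod
              (l := l') (fun y hy => hmem y (by simp [hy])) rfl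
            simp only [List.length_cons] at hlen
            omega
          · rw [← hp]; simp

end Ball

section ClassMin

variable {H : Type*} [Group H] {S : Set H}

lemma conjSet_nonempty (h : H) :
    {k : ℕ | ∃ g : H, wordLength S (g⁻¹ * h * g) = k}.Nonempty :=
  ⟨wordLength S h, 1, by simp⟩

/-- The minimal word length in the conjugacy class. -/
noncomputable def cmin (S : Set H) (h : H) : ℕ :=
  sInf {k : ℕ | ∃ g : H, wordLength S (g⁻¹ * h * g) = k}

lemma cmin_le (h g : H) : cmin S h ≤ wordLength S (g⁻¹ * h * g) :=
  Nat.sInf_le ⟨g, rfl⟩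

lemma cmin_attained (h : H) : ∃ g : H, wordLength S (g⁻¹ * h * g) = cmin S h :=
  Nat.sInf_mem (conjSet_nonempty h)

lemma exists_conjMin_conjugate (x : H) :
    ∃ c u : H, ConjMin S u ∧ x = c⁻¹ * u * c := by
  obtain ⟨g, hg⟩ := cmin_attained (S := S) x
  refine ⟨g⁻¹, g⁻¹ * x * g, ?_, by group⟩
  intro g'
  rw [hg]
  have e : g'⁻¹ * (g⁻¹ * x * g) * g' = (g * g')⁻¹ * x * (g * g') := by group
  rw [e]
  exact cmin_le x (g * g')

end ClassMin


/-- Let `H` be a group with finite symmetric generating set `S` whose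
word metric is `δ`-hyperbolic. For any `κ ≥ 0` there is `M > 0`, depending only on `κ`,
`H`, `S`, `δ`, such that every `κ`-almost conjugacy minimal `h ∈ H` can be written as
`h = c⁻¹uc` with `|c| ≤ M` and `u` a conjugacy minimal element of the conjugacy class of
`h`. -/
theorem stmt7 {H : Type*} [Group H] (S : Set H) (δ : ℝ)
    (hSfin : S.Finite) (hSsym : ∀ s ∈ S, s⁻¹ ∈ S) (hSgen : Subgroup.closure S = ⊤)
    (hδ : 0 ≤ δ) (hhyp : WordHyperbolic S δ) :
    ∀ κ : ℝ, 0 ≤ κ → ∃ M : ℝ, 0 < M ∧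
      ∀ h : H, AlmostConjMin S κ h →
        ∃ c u : H, (wordLength S c : ℝ) ≤ M ∧ ConjMin S u ∧ h = c⁻¹ * u * c := by
  intro κ hκ
  -- choice of conjugators for elements of the small ball
  have hall : ∀ x : H, ∃ p : H × H, ConjMin S p.2 ∧ x = p.1⁻¹ * p.2 * p.1 := by
    intro x
    obtain ⟨c, u, h1, h2⟩ := exists_conjMin_conjugate (S := S) x
    exact ⟨(c, u), h1, h2⟩
  choose F hF1 hF2 using hall
  set R : ℕ := ⌈3 * δ + 3 + κ⌉₊ with hR
  have hBfin : {x : H | wordLength S x ≤ R}.Finite := ball_finite hSfin hSsym hSgen R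
  have hImfin : ((fun x => (wordLength S (F x).1 : ℝ)) '' {x : H | wordLength S x ≤ R}).Finite :=
    hBfin.image _
  obtain ⟨M₂, hM₂⟩ : ∃ M₂ : ℝ, ∀ y ∈ (fun x => (wordLength S (F x).1 : ℝ)) ''
      {x : H | wordLength S x ≤ R}, y ≤ M₂ := by
    obtain ⟨M₂, hM₂⟩ := hImfin.bddAbove
    exact ⟨M₂, fun y hy => hM₂ hy⟩
  refine ⟨max M₂ (κ / 2 + 3 * δ + 3) + 1, by
    have : κ / 2 + 3 * δ + 3 ≤ max M₂ (κ / 2 + 3 * δ + 3) := le_max_right _ _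
    linarith, ?_⟩
  intro h hκh
  set m : ℕ := cmin S h with hm
  -- |h| ≤ m + κ
  obtain ⟨g₀, hg₀⟩ := cmin_attained (S := S) h
  have hn_le : (wordLength S h : ℝ) ≤ (m : ℝ) + κ := by
    have := hκh g₀
    rw [hg₀] at this
    exact this
  by_cases hcase : (m : ℝ) < 3 * δ + 3
  · -- small case: h lies in a finite ball
    have hhB : h ∈ {x : H | wordLength S x ≤ R} := by
      have h1 : (wordLength S h : ℝ) ≤ (R : ℝ) := by
        have := Nat.le_ceil (3 * δ + 3 + κ)
        calc (wordLength S h : ℝ) ≤ (m : ℝ) + κ := hn_le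
          _ ≤ 3 * δ + 3 + κ := by linarith
          _ ≤ (R : ℝ) := this
      simpa using (Nat.cast_le (α := ℝ)).1 h1
    refine ⟨(F h).1, (F h).2, ?_, hF1 h, hF2 h⟩
    have : (wordLength S (F h).1 : ℝ) ≤ M₂ := hM₂ _ ⟨h, hhB, rfl⟩
    have h2 : M₂ ≤ max M₂ (κ / 2 + 3 * δ + 3) := le_max_left _ _
    linarith
  · -- main case
    push_neg at hcase
    have htne : {k : ℕ | ∃ c' : H, wordLength S c' = k ∧
        wordLength S (c' * h * c'⁻¹) = m}.Nonempty := by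
      refine ⟨wordLength S g₀⁻¹, g₀⁻¹, rfl, ?_⟩
      have e : g₀⁻¹ * h * (g₀⁻¹)⁻¹ = g₀⁻¹ * h * g₀ := by group
      rw [e, hg₀]
    set t : ℕ := sInf {k : ℕ | ∃ c' : H, wordLength S c' = k ∧
        wordLength S (c' * h * c'⁻¹) = m} with ht
    obtain ⟨c, hct, hcm⟩ := Nat.sInf_mem htne
    set u : H := c * h * c⁻¹ with hu
    have hmin : ∀ c' : H, wordLength S (c' * h * c'⁻¹) = m → t ≤ wordLength S c' :=
      fun c' h' => Nat.sInf_le ⟨c', rfl, h'⟩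
    have hconjlb : ∀ g : H, m ≤ wordLength S (g⁻¹ * h * g) := cmin_le h
    -- corner estimate at the left corner
    have hD := corner hSsym hSgen hδ hhyp hconjlb rfl hcm hct hmin
    -- corner estimate at the right corner (applied to h⁻¹)
    have hconjlb' : ∀ g : H, m ≤ wordLength S (g⁻¹ * h⁻¹ * g) := by
      intro g
      have e : g⁻¹ * h⁻¹ * g = (g⁻¹ * h * g)⁻¹ := by group
      rw [e, wordLength_inv hSsym hSgen]
      exact hconjlb g
    have hu' : u⁻¹ = c * h⁻¹ * c⁻¹ := by rw [hu]; group
    have hum' : wordLength S u⁻¹ = m := by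
      rw [wordLength_inv hSsym hSgen]; exact hcm
    have hmin' : ∀ c' : H, wordLength S (c' * h⁻¹ * c'⁻¹) = m → t ≤ wordLength S c' := by
      intro c' hc'
      apply hmin
      have e : c' * h * c'⁻¹ = (c' * h⁻¹ * c'⁻¹)⁻¹ := by group
      rw [e, wordLength_inv hSsym hSgen, hc']
    have hE := corner hSsym hSgen hδ hhyp hconjlb' hu' hum' hct hmin'
    -- notation for the relevant distances
    set n : ℕ := wordLength S h with hn
    set D : ℕ := wordLength S (c⁻¹ * u) with hDd
    set E : ℕ := wordLength S (c⁻¹ * u⁻¹) with hEd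
    -- compute the distances appearing in the Gromov products at w = c⁻¹ * u
    have dcw : wordDist S c⁻¹ (c⁻¹ * u) = m := by
      simp only [wordDist, inv_mul_cancel_left]; exact hcm
    have d1w : wordDist S 1 (c⁻¹ * u) = D := by
      simp only [wordDist, inv_one, one_mul, hDd]
    have dc1 : wordDist S c⁻¹ 1 = t := by
      simp only [wordDist, inv_inv, mul_one]; exact hct
    have dhw : wordDist S h (c⁻¹ * u) = t := by
      have e : h⁻¹ * (c⁻¹ * u) = c⁻¹ := by rw [hu]; group
      rw [wordDist, e, wordLength_inv hSsym hSgen]; exact hct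
    have d1h : wordDist S 1 h = n := by
      simp only [wordDist, inv_one, one_mul, hn]
    have dch : wordDist S c⁻¹ h = E := by
      have e : (c⁻¹)⁻¹ * h = (c⁻¹ * u⁻¹)⁻¹ := by rw [hu]; group
      rw [wordDist, e, wordLength_inv hSsym hSgen, hEd]
    -- the four point inequality
    have hfour := fourPoint hSsym hSgen hhyp (c⁻¹ * u) c⁻¹ h 1
    rw [gromovProd, gromovProd, gromovProd] at hfour
    rw [dcw, d1w, dc1, dhw, d1h, dch] at hfour
    -- conclude t is small
    have hA1 : ((m : ℝ) + D - t) / 2 > 2 * δ + 2 := by linarith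
    have hA2 : ((m : ℝ) + t - E) / 2 < δ + 1 := by linarith
    have hA3 : ((D : ℝ) + t - n) / 2 < 2 * δ + 2 := by
      rcases min_le_iff.1 (le_refl (min (((m : ℝ) + D - t) / 2) (((D : ℝ) + t - n) / 2))) with
        hle | hle
      · -- use hfour : min ... - (δ+1) ≤ A2
        have := hfour
        by_contra hcon
        push_neg at hcon
        have hminv : min (((m : ℝ) + D - t) / 2) (((D : ℝ) + t - n) / 2) ≥ 2 * δ + 2 :=
          le_min (le_of_lt hA1) hcon
        linarith
      · by_contra hcon
        push_neg at hcon
        have hminv : min (((m : ℝ) + D - t) / 2) (((D : ℝ) + t - n) / 2) ≥ 2 * δ + 2 :=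
          le_min (le_of_lt hA1) hcon
        linarith
    have htbound : (t : ℝ) < κ / 2 + 3 * δ + 3 := by
      -- n > D + t - (4δ + 4) > 2t + m - (6δ + 6), and n ≤ m + κ
      linarith
    refine ⟨c, u, ?_, ?_, by rw [hu]; group⟩
    · have h2 : κ / 2 + 3 * δ + 3 ≤ max M₂ (κ / 2 + 3 * δ + 3) := le_max_right _ _
      rw [hct]
      linarith
    · intro g
      have e : g⁻¹ * u * g = (c⁻¹ * g)⁻¹ * h * (c⁻¹ * g) := by rw [hu]; group
      rw [hcm, e]
      exact hconjlb (c⁻¹ * g)
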